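/- For all real numbers p ∈ [0,1] and q ∈ [1/4,3/4], the Kullback–Leibler divergence between Bernoulli(p) and Bernoulli(q) satisfies p·log(p/q) + (1−p)·log((1−p)/(1−q)) ≤ (16/3)·(p−q)², where terms of the form 0·log(0/·) are interpreted as 0. -/

import Mathlib

theorem kl_bernoulli_le (p q : ℝ) (hp : p ∈ Set.Icc (0 : ℝ) 1)
    (hq : q ∈ Set.Icc (1/4 : ℝ) (3/4)) :
    p * Real.log (p / q) + (1 - p) * Real.log ((1 - p) / (1 - q)) ≤
      16 / 3 * (p - q) ^ 2 := by
  obtain ⟨hp0, hp1⟩ := hp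
  obtain ⟨hq1, hq2⟩ := hq
  have hqpos : (0:ℝ) < q := by linarith
  have hq1pos : (0:ℝ) < 1 - q := by linarith
  have h1 : p * Real.log (p / q) ≤ p * (p - q) / q := by
    rcases eq_or_lt_of_le hp0 with h | h
    · simp [← h]
    · have hlog := Real.log_le_sub_one_of_pos (div_pos h hqpos)
      have := mul_le_mul_of_nonneg_left hlog (le_of_lt h)
      calc p * Real.log (p / q) ≤ p * (p / q - 1) := this
        _ = p * (p - q) / q := by field_simp
  have h2 : (1 - p) * Real.log ((1 - p) / (1 - q)) ≤ (1 - p) * (q - p) / (1 - q) := by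
    rcases eq_or_lt_of_le hp1 with h | h
    · simp [h]
    · have hppos : (0:ℝ) < 1 - p := by linarith
      have hlog := Real.log_le_sub_one_of_pos (div_pos hppos hq1pos)
      have := mul_le_mul_of_nonneg_left hlog (le_of_lt hppos)
      calc (1 - p) * Real.log ((1 - p) / (1 - q)) ≤ (1 - p) * ((1 - p) / (1 - q) - 1) := this
        _ = (1 - p) * (q - p) / (1 - q) := by field_simp; ring
  have hsum : p * (p - q) / q + (1 - p) * (q - p) / (1 - q) = (p - q) ^ 2 / (q * (1 - q)) := by
    field_simp
    ring
  have hfin : (p - q) ^ 2 / (q * (1 - q)) ≤ 16 / 3 * (p - q) ^ 2 := by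
    rw [div_le_iff₀ (by positivity)]
    nlinarith [mul_nonneg (sq_nonneg (p - q)) (by nlinarith : (0:ℝ) ≤ q * (1 - q) - 3/16)]
  linarith [h1, h2, hsum ▸ hfin]
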